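/- For v, w ∈ ℓ²(ℤ) with w bounded, the identity ⟨D₊D₋v, D(vw)⟩ = −(1/Δx²)⟨D₊w, v·S₊v⟩ + (1/Δx²)⟨Dw, S₋v·S₊v⟩ holds. -/

import Mathlib

noncomputable section
open scoped BigOperators

/-- forward shift -/
def Sp (v : ℤ → ℝ) : ℤ → ℝ := fun j => v (j + 1)
/-- backward shift -/
def Sm (v : ℤ → ℝ) : ℤ → ℝ := fun j => v (j - 1)
/-- forward discrete derivative -/
def Dp (dx : ℝ) (v : ℤ → ℝ) : ℤ → ℝ := fun j => (v (j + 1) - v j) / dx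
/-- backward discrete derivative -/
def Dm (dx : ℝ) (v : ℤ → ℝ) : ℤ → ℝ := fun j => (v j - v (j - 1)) / dx
/-- centered discrete derivative -/
def Dc (dx : ℝ) (v : ℤ → ℝ) : ℤ → ℝ := fun j => (v (j + 1) - v (j - 1)) / (2 * dx)
/-- discrete Laplacian D₊D₋ -/
def DpDm (dx : ℝ) (v : ℤ → ℝ) : ℤ → ℝ := fun j => (v (j + 1) - 2 * v j + v (j - 1)) / dx ^ 2
/-- discrete inner product ⟨v,w⟩ = Δx ∑ v_j w_j -/
def ip (dx : ℝ) (v w : ℤ → ℝ) : ℝ := dx * ∑' j : ℤ, v j * w j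
/-- squared ℓ²_Δ norm -/
def n2sq (dx : ℝ) (v : ℤ → ℝ) : ℝ := dx * ∑' j : ℤ, (v j) ^ 2
/-- ℓ²_Δ norm -/
def nrm (dx : ℝ) (v : ℤ → ℝ) : ℝ := Real.sqrt (n2sq dx v)
/-- sup norm -/
def supn (v : ℤ → ℝ) : ℝ := ⨆ j : ℤ, |v j|
/-- v ∈ ℓ²(ℤ) -/
def l2 (v : ℤ → ℝ) : Prop := Summable (fun j : ℤ => (v j) ^ 2)
/-- v ∈ ℓ^∞(ℤ) -/
def linf (v : ℤ → ℝ) : Prop := BddAbove (Set.range fun j : ℤ => |v j|)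

/-- canonical triple sum -/
def SS (v w : ℤ → ℝ) (p q r : ℤ) : ℝ := ∑' j : ℤ, v (j + p) * v (j + q) * w (j + r)

lemma summable_SS (v w : ℤ → ℝ) (hv : l2 v) (hw : linf w) (p q r : ℤ) :
    Summable fun j : ℤ => v (j + p) * v (j + q) * w (j + r) := by
  obtain ⟨C, hC⟩ := hw
  have hCb : ∀ j : ℤ, |w j| ≤ C := fun j => hC ⟨j, rfl⟩
  have hp : Summable fun j : ℤ => (v (j + p)) ^ 2 := by
    have := (Equiv.addRight p).summable_iff.mpr hv
    simpa [Function.comp_def] using this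
  have hq : Summable fun j : ℤ => (v (j + q)) ^ 2 := by
    have := (Equiv.addRight q).summable_iff.mpr hv
    simpa [Function.comp_def] using this
  have habs : Summable fun j : ℤ => |v (j + p) * v (j + q)| := by
    refine Summable.of_nonneg_of_le (fun j => abs_nonneg _) (fun j => ?_) (hp.add hq)
    have h := abs_mul (v (j + p)) (v (j + q))
    nlinarith [sq_nonneg (|v (j + p)| - |v (j + q)|), sq_abs (v (j + p)), sq_abs (v (j + q)),
      abs_nonneg (v (j + p)), abs_nonneg (v (j + q))]
  refine Summable.of_abs (Summable.of_nonneg_of_le (fun j => abs_nonneg _) (fun j => ?_)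
    (habs.mul_right C))
  rw [abs_mul]
  exact mul_le_mul_of_nonneg_left (hCb _) (abs_nonneg _)

lemma shift_SS (v w : ℤ → ℝ) (p q r c : ℤ) : SS v w (p + c) (q + c) (r + c) = SS v w p q r := by
  unfold SS
  rw [← (Equiv.addRight c).tsum_eq (fun j : ℤ => v (j + p) * v (j + q) * w (j + r))]
  exact tsum_congr fun j => by
    simp only [Equiv.coe_addRight]
    rw [show j + (p + c) = j + c + p by ring, show j + (q + c) = j + c + q by ring,
      show j + (r + c) = j + c + r by ring]

lemma comm_SS (v w : ℤ → ℝ) (p q r : ℤ) : SS v w p q r = SS v w q p r := by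
  unfold SS
  exact tsum_congr fun j => by ring

lemma tsum_combo {f1 f2 f3 f4 f5 f6 : ℤ → ℝ} (h1 : Summable f1) (h2 : Summable f2)
    (h3 : Summable f3) (h4 : Summable f4) (h5 : Summable f5) (h6 : Summable f6) :
    ∑' j : ℤ, (f1 j - f2 j - 2 * f3 j + 2 * f4 j + f5 j - f6 j)
      = (∑' j, f1 j) - (∑' j, f2 j) - 2 * (∑' j, f3 j) + 2 * (∑' j, f4 j)
        + (∑' j, f5 j) - (∑' j, f6 j) := by
  have H := ((((h1.hasSum.sub h2.hasSum).sub (h3.hasSum.mul_left 2)).add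
    (h4.hasSum.mul_left 2)).add h5.hasSum).sub h6.hasSum
  exact H.tsum_eq

theorem IPP2 (dx : ℝ) (hdx : 0 < dx) (v w : ℤ → ℝ) (hv : l2 v) (hw : linf w) :
    ip dx (DpDm dx v) (Dc dx (fun i => v i * w i))
      = -(1 / dx ^ 2) * ip dx (Dp dx w) (fun i => v i * Sp v i)
        + (1 / dx ^ 2) * ip dx (Dc dx w) (fun i => Sm v i * Sp v i) := by

  have hne : dx ≠ 0 := ne_of_gt hdx
  have hsum := summable_SS v w hv hw
  have e1 : SS v w 1 1 1 = SS v w 0 0 0 := by simpa using shift_SS v w 0 0 0 1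
  have e3 : SS v w 1 0 0 = SS v w 0 (-1) (-1) := by simpa using shift_SS v w 0 (-1) (-1) 1
  have e4 : SS v w 0 0 0 = SS v w (-1) (-1) (-1) := by simpa using shift_SS v w (-1) (-1) (-1) 1
  have e5 : SS v w 1 0 0 = SS v w 0 1 0 := comm_SS v w 1 0 0
  have hL : (∑' j : ℤ, DpDm dx v j * Dc dx (fun i => v i * w i) j)
      = (1 / (2 * dx ^ 3)) * (SS v w 1 1 1 - SS v w (-1) 1 (-1) - 2 * SS v w 0 1 1
        + 2 * SS v w 0 (-1) (-1) + SS v w (-1) 1 1 - SS v w (-1) (-1) (-1)) := by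
    unfold DpDm Dc SS
    rw [← tsum_combo (hsum 1 1 1) (hsum (-1) 1 (-1)) (hsum 0 1 1) (hsum 0 (-1) (-1))
      (hsum (-1) 1 1) (hsum (-1) (-1) (-1)), ← tsum_mul_left]
    refine tsum_congr fun j => ?_
    rw [show j + (-1 : ℤ) = j - 1 by ring, show j + (0 : ℤ) = j by ring]
    field_simp
    ring
  have hR1 : (∑' j : ℤ, Dp dx w j * (v j * Sp v j))
      = (1 / dx) * (SS v w 0 1 1 - SS v w 0 1 0) := by
    unfold Dp Sp SS
    rw [← Summable.tsum_sub (hsum 0 1 1) (hsum 0 1 0), ← tsum_mul_left]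
    refine tsum_congr fun j => ?_
    rw [show j + (0 : ℤ) = j by ring]
    field_simp
  have hR2 : (∑' j : ℤ, Dc dx w j * (Sm v j * Sp v j))
      = (1 / (2 * dx)) * (SS v w (-1) 1 1 - SS v w (-1) 1 (-1)) := by
    unfold Dc Sm Sp SS
    rw [← Summable.tsum_sub (hsum (-1) 1 1) (hsum (-1) 1 (-1)), ← tsum_mul_left]
    refine tsum_congr fun j => ?_
    rw [show j + (-1 : ℤ) = j - 1 by ring]
    field_simp
  unfold ip
  rw [hL, hR1, hR2, e1, ← e4, ← e3, e5]
  field_simp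
  ring
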